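/- In a resource category, propagation of a pointed bag through a pairing: for a comonoid morphism h : Δ → Γ, a finite multiset b of pointed morphisms Δ → A, and morphisms f : Γ ⊗ A → B, g : Γ ⊗ A → C, one has ⟨f, g⟩ ∘ ⟨h, Πb⟩ = Σ over splittings b = b1 * b2 of ⟨f ∘ ⟨h, Πb1⟩, g ∘ ⟨h, Πb2⟩⟩, where ⟨f,g⟩ = (f ⊗ g) ∘ δ. -/

import Mathlib

open CategoryTheory MonoidalCategory

universe v u

/-- An additive symmetric monoidal category: each hom-set is a commutative monoid and
composition and tensor preserve the additive structure. -/
class ASMC (C : Type u) [Category.{v} C] [MonoidalCategory C] where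
  homMon : ∀ X Y : C, AddCommMonoid (X ⟶ Y)
  comp_add : ∀ {X Y Z : C} (f : X ⟶ Y) (g h : Y ⟶ Z), f ≫ (g + h) = f ≫ g + f ≫ h
  add_comp : ∀ {X Y Z : C} (f g : X ⟶ Y) (h : Y ⟶ Z), (f + g) ≫ h = f ≫ h + g ≫ h
  comp_zero : ∀ {X Y Z : C} (f : X ⟶ Y), f ≫ (0 : Y ⟶ Z) = 0
  zero_comp : ∀ {X Y Z : C} (g : Y ⟶ Z), (0 : X ⟶ Y) ≫ g = 0
  add_tensorHom : ∀ {X Y Z W : C} (f g : X ⟶ Y) (h : Z ⟶ W),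
    (f + g) ⊗ₘ h = f ⊗ₘ h + g ⊗ₘ h
  tensorHom_add : ∀ {X Y Z W : C} (f : X ⟶ Y) (g h : Z ⟶ W),
    f ⊗ₘ (g + h) = f ⊗ₘ g + f ⊗ₘ h
  zero_tensorHom : ∀ {X Y Z W : C} (h : Z ⟶ W), (0 : X ⟶ Y) ⊗ₘ h = 0
  tensorHom_zero : ∀ {X Y Z W : C} (f : X ⟶ Y), f ⊗ₘ (0 : Z ⟶ W) = 0

attribute [instance] ASMC.homMon

variable (C : Type u) [Category.{v} C] [MonoidalCategory C] [SymmetricCategory C]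

/-- The middle-four interchange `(A ⊗ B) ⊗ (A' ⊗ B') ≅ (A ⊗ A') ⊗ (B ⊗ B')`. -/
def mid (A B A' B' : C) : (A ⊗ B) ⊗ (A' ⊗ B') ⟶ (A ⊗ A') ⊗ (B ⊗ B') :=
  (α_ A B (A' ⊗ B')).hom ≫
    (A ◁ ((α_ B A' B').inv ≫ ((β_ B A').hom ▷ B') ≫ (α_ A' B B').hom)) ≫
    (α_ A A' (B ⊗ B')).inv

variable [ASMC C]

/-- A (commutative) bialgebra structure on every object, compatible with the monoidal
structure. -/
structure BialgStruct where
  δ : ∀ A : C, A ⟶ A ⊗ A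
  ε : ∀ A : C, A ⟶ 𝟙_ C
  μ : ∀ A : C, A ⊗ A ⟶ A
  η : ∀ A : C, 𝟙_ C ⟶ A
  coassoc : ∀ A, δ A ≫ (δ A ▷ A) ≫ (α_ A A A).hom = δ A ≫ (A ◁ δ A)
  counit_l : ∀ A, δ A ≫ (ε A ▷ A) = (λ_ A).inv
  counit_r : ∀ A, δ A ≫ (A ◁ ε A) = (ρ_ A).inv
  cocomm : ∀ A, δ A ≫ (β_ A A).hom = δ A
  assoc : ∀ A, (α_ A A A).hom ≫ (A ◁ μ A) ≫ μ A = (μ A ▷ A) ≫ μ A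
  unit_l : ∀ A, (η A ▷ A) ≫ μ A = (λ_ A).hom
  unit_r : ∀ A, (A ◁ η A) ≫ μ A = (ρ_ A).hom
  comm : ∀ A, (β_ A A).hom ≫ μ A = μ A
  bialg : ∀ A, μ A ≫ δ A = (δ A ⊗ₘ δ A) ≫ mid C A A A A ≫ (μ A ⊗ₘ μ A)
  η_δ : ∀ A, η A ≫ δ A = (λ_ (𝟙_ C)).inv ≫ (η A ⊗ₘ η A)
  μ_ε : ∀ A, μ A ≫ ε A = (ε A ⊗ₘ ε A) ≫ (λ_ (𝟙_ C)).hom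
  η_ε : ∀ A, η A ≫ ε A = 𝟙 (𝟙_ C)
  δ_tensor : ∀ A B, δ (A ⊗ B) = (δ A ⊗ₘ δ B) ≫ mid C A A B B
  ε_tensor : ∀ A B, ε (A ⊗ B) = (ε A ⊗ₘ ε B) ≫ (λ_ (𝟙_ C)).hom
  ε_unit : ε (𝟙_ C) = 𝟙 (𝟙_ C)
  μ_tensor : ∀ A B, μ (A ⊗ B) = mid C A B A B ≫ (μ A ⊗ₘ μ B)
  η_tensor : ∀ A B, η (A ⊗ B) = (λ_ (𝟙_ C)).inv ≫ (η A ⊗ₘ η B)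
  η_unit : η (𝟙_ C) = 𝟙 (𝟙_ C)

/-- A resource category structure: a bialgebra on every object together with pointed
identities satisfying the laws of pointed identities. -/
structure ResourceStruct extends BialgStruct C where
  pid : ∀ A : C, A ⟶ A
  pid_idem : ∀ A, pid A ≫ pid A = pid A
  pid_ε : ∀ A, pid A ≫ ε A = 0
  η_pid : ∀ A, η A ≫ pid A = 0
  pid_δ : ∀ A, pid A ≫ δ A =
    pid A ≫ (ρ_ A).inv ≫ (A ◁ η A) + pid A ≫ (λ_ A).inv ≫ (η A ▷ A)
  μ_pid : ∀ A, μ A ≫ pid A =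
    (A ◁ ε A) ≫ (ρ_ A).hom ≫ pid A + (ε A ▷ A) ≫ (λ_ A).hom ≫ pid A

variable {C}

/-- The convolution product `f * g = μ ∘ (f ⊗ g) ∘ δ`. -/
def conv (R : BialgStruct C) {A B : C} (f g : A ⟶ B) : A ⟶ B :=
  R.δ A ≫ (f ⊗ₘ g) ≫ R.μ B

/-- The convolution unit `1 = η ∘ ε`. -/
def convOne (R : BialgStruct C) (A B : C) : A ⟶ B := R.ε A ≫ R.η B

/-- The product `Π[f₁,…,fₙ] = f₁ * ⋯ * fₙ` of a bag (enumerated as a list) of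
morphisms, with `Π[] = 1`. -/
def prodL (R : BialgStruct C) {A B : C} (l : List (A ⟶ B)) : A ⟶ B :=
  l.foldr (conv R) (convOne R A B)

/-- A morphism is pointed when `id• ∘ f = f`. -/
def IsPointedHom (R : ResourceStruct C) {A B : C} (f : A ⟶ B) : Prop := f ≫ R.pid B = f

/-- The sublist of `l` selected by the positions the 2-partitioning `p` sends to `i`. -/
def selH {A B : C} (l : List (A ⟶ B)) (p : Fin l.length → Fin 2) (i : Fin 2) :
    List (A ⟶ B) :=
  ((List.finRange l.length).filter (fun j => p j = i)).map l.get

/-- The pairing `⟨u, v⟩ = (u ⊗ v) ∘ δ`. -/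
def pairH (R : ResourceStruct C) {D X Y : C} (u : D ⟶ X) (v : D ⟶ Y) : D ⟶ X ⊗ Y :=
  R.δ D ≫ (u ⊗ₘ v)

/-- Comonoid morphisms: `δ ∘ h = (h ⊗ h) ∘ δ` and `ε ∘ h = ε`. -/
def IsComonoidHom (R : ResourceStruct C) {D G : C} (h : D ⟶ G) : Prop :=
  h ≫ R.δ G = R.δ D ≫ (h ⊗ₘ h) ∧ h ≫ R.ε G = R.ε D

set_option linter.unusedSectionVars false

section Lemmas
variable {C : Type u} [Category.{v} C] [MonoidalCategory C] [SymmetricCategory C] [ASMC C]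

theorem inner_nat {B A' B' B₂ A₂' B₂' : C} (g : B ⟶ B₂) (f' : A' ⟶ A₂') (g' : B' ⟶ B₂') :
    (g ⊗ₘ (f' ⊗ₘ g')) ≫ ((α_ B₂ A₂' B₂').inv ≫ ((β_ B₂ A₂').hom ▷ B₂') ≫ (α_ A₂' B₂ B₂').hom) =
      ((α_ B A' B').inv ≫ ((β_ B A').hom ▷ B') ≫ (α_ A' B B').hom) ≫ (f' ⊗ₘ (g ⊗ₘ g')) := by
  have h2 : ((g ⊗ₘ f') ⊗ₘ g') ≫ ((β_ B₂ A₂').hom ▷ B₂') =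
      ((β_ B A').hom ▷ B') ≫ ((f' ⊗ₘ g) ⊗ₘ g') := by
    rw [← tensorHom_id, ← tensorHom_id, tensorHom_comp_tensorHom, tensorHom_comp_tensorHom,
      BraidedCategory.braiding_naturality, Category.comp_id, Category.id_comp]
  rw [associator_inv_naturality_assoc, reassoc_of% h2, associator_naturality]
  simp only [Category.assoc]

theorem mid_nat {A B A' B' A₂ B₂ A₂' B₂' : C} (f : A ⟶ A₂) (g : B ⟶ B₂) (f' : A' ⟶ A₂')
    (g' : B' ⟶ B₂') :
    ((f ⊗ₘ g) ⊗ₘ (f' ⊗ₘ g')) ≫ mid C A₂ B₂ A₂' B₂' = mid C A B A' B' ≫ ((f ⊗ₘ f') ⊗ₘ (g ⊗ₘ g')) := by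
  unfold mid
  rw [associator_naturality_assoc, ← id_tensorHom, ← id_tensorHom]
  have key : (f ⊗ₘ (g ⊗ₘ (f' ⊗ₘ g'))) ≫
      (𝟙 A₂ ⊗ₘ ((α_ B₂ A₂' B₂').inv ≫ ((β_ B₂ A₂').hom ▷ B₂') ≫ (α_ A₂' B₂ B₂').hom)) =
      (𝟙 A ⊗ₘ ((α_ B A' B').inv ≫ ((β_ B A').hom ▷ B') ≫ (α_ A' B B').hom)) ≫
        (f ⊗ₘ (f' ⊗ₘ (g ⊗ₘ g'))) := by
    rw [tensorHom_comp_tensorHom, tensorHom_comp_tensorHom, inner_nat, Category.comp_id, Category.id_comp]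
  rw [reassoc_of% key, associator_inv_naturality]
  simp only [Category.assoc]

theorem midW1 (D : C) :
    ((ρ_ D).inv ▷ (D ⊗ D)) ≫ mid C D (𝟙_ C) D D ≫ ((D ⊗ D) ◁ (λ_ D).hom) = (α_ D D D).inv := by
  simp [mid]

theorem midW2 (D : C) :
    ((λ_ D).inv ▷ (D ⊗ D)) ≫ mid C (𝟙_ C) D D D ≫ ((λ_ D).hom ▷ (D ⊗ D)) =
      (α_ D D D).inv ≫ ((β_ D D).hom ▷ D) ≫ (α_ D D D).hom := by
  simp [mid]

theorem tensorHom_left_decomp {X X' Y Y' Y'' : C} (P : X ⟶ X') (h : Y ⟶ Y') (v : Y' ⟶ Y'') :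
    P ⊗ₘ (h ≫ v) = (X ◁ h) ≫ (P ⊗ₘ v) := by
  rw [← id_tensorHom, tensorHom_comp_tensorHom, Category.id_comp]

theorem tensorHom_right_decomp {X X' X'' Y Y' : C} (h : X ⟶ X') (P : X' ⟶ X'') (v : Y ⟶ Y') :
    (h ≫ P) ⊗ₘ v = (h ▷ Y) ≫ (P ⊗ₘ v) := by
  rw [← tensorHom_id, tensorHom_comp_tensorHom, Category.id_comp]

/-! ### Additivity helpers -/

theorem comp_sum {ι : Type*} (s : Finset ι) {X Y Z : C} (f : X ⟶ Y) (g : ι → (Y ⟶ Z)) :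
    f ≫ (∑ i ∈ s, g i) = ∑ i ∈ s, f ≫ g i := by
  classical
  induction s using Finset.induction with
  | empty => simp [ASMC.comp_zero]
  | insert _ _ h ih => rw [Finset.sum_insert h, Finset.sum_insert h, ASMC.comp_add, ih]

theorem sum_comp {ι : Type*} (s : Finset ι) {X Y Z : C} (f : ι → (X ⟶ Y)) (g : Y ⟶ Z) :
    (∑ i ∈ s, f i) ≫ g = ∑ i ∈ s, f i ≫ g := by
  classical
  induction s using Finset.induction with
  | empty => simp [ASMC.zero_comp]
  | insert _ _ h ih => rw [Finset.sum_insert h, Finset.sum_insert h, ASMC.add_comp, ih]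

theorem tensor_sum_right {ι : Type*} (s : Finset ι) {X Y Z W : C} (f : X ⟶ Y)
    (g : ι → (Z ⟶ W)) : f ⊗ₘ (∑ i ∈ s, g i) = ∑ i ∈ s, f ⊗ₘ g i := by
  classical
  induction s using Finset.induction with
  | empty => simp [ASMC.tensorHom_zero]
  | insert _ _ h ih => rw [Finset.sum_insert h, Finset.sum_insert h, ASMC.tensorHom_add, ih]

/-! ### Comonoid computations -/

variable (R : ResourceStruct C)

theorem delta_whiskerRight (A : C) :
    R.δ A ≫ (R.δ A ▷ A) = R.δ A ≫ (A ◁ R.δ A) ≫ (α_ A A A).inv := by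
  simp only [← Category.assoc]
  rw [Iso.eq_comp_inv, Category.assoc, R.coassoc]

theorem delta_delta_mid (A : C) :
    R.δ A ≫ (R.δ A ⊗ₘ R.δ A) ≫ mid C A A A A = R.δ A ≫ (R.δ A ⊗ₘ R.δ A) := by
  have inner : R.δ A ≫ (A ◁ R.δ A) ≫ (α_ A A A).inv ≫ ((β_ A A).hom ▷ A) ≫ (α_ A A A).hom =
      R.δ A ≫ (A ◁ R.δ A) := by
    rw [← reassoc_of% (delta_whiskerRight R A)]
    rw [← comp_whiskerRight_assoc, R.cocomm]
    exact R.coassoc A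
  rw [MonoidalCategory.tensorHom_def]
  unfold mid
  simp only [Category.assoc]
  rw [associator_naturality_right_assoc]
  rw [reassoc_of% (R.coassoc A)]
  rw [← MonoidalCategory.whiskerLeft_comp_assoc, ← MonoidalCategory.whiskerLeft_comp_assoc]
  simp only [Category.assoc]
  rw [inner]
  simp only [MonoidalCategory.whiskerLeft_comp, Category.assoc]
  rw [associator_inv_naturality_right]
  rw [← reassoc_of% (delta_whiskerRight R A)]

theorem eta_mu_left {D A : C} (v : D ⟶ A) :
    (R.η A ⊗ₘ v) ≫ R.μ A = (λ_ D).hom ≫ v := by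
  rw [tensorHom_def', Category.assoc, R.unit_l, leftUnitor_naturality]

theorem eta_mu_right {D A : C} (v : D ⟶ A) :
    (v ⊗ₘ R.η A) ≫ R.μ A = (ρ_ D).hom ≫ v := by
  rw [MonoidalCategory.tensorHom_def, Category.assoc, R.unit_r, rightUnitor_naturality]

theorem pointed_delta {D A : C} (x : D ⟶ A) (hx : IsPointedHom R x) :
    x ≫ R.δ A = (ρ_ D).inv ≫ (x ⊗ₘ R.η A) + (λ_ D).inv ≫ (R.η A ⊗ₘ x) := by
  have h0 : x ≫ R.δ A = x ≫ (R.pid A ≫ R.δ A) := by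
    rw [← Category.assoc, hx]
  rw [h0, R.pid_δ, ASMC.comp_add]
  congr 1
  · rw [← Category.assoc, hx, MonoidalCategory.tensorHom_def, ← rightUnitor_inv_naturality_assoc]
  · rw [← Category.assoc, hx, tensorHom_def', ← leftUnitor_inv_naturality_assoc]

theorem term_left {D A : C} (x u v : D ⟶ A) :
    R.δ D ≫ (((ρ_ D).inv ≫ (x ⊗ₘ R.η A)) ⊗ₘ (R.δ D ≫ (u ⊗ₘ v))) ≫ mid C A A A A ≫
        (R.μ A ⊗ₘ R.μ A) =
      R.δ D ≫ (conv R.toBialgStruct x u ⊗ₘ v) := by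
  calc R.δ D ≫ (((ρ_ D).inv ≫ (x ⊗ₘ R.η A)) ⊗ₘ (R.δ D ≫ (u ⊗ₘ v))) ≫ mid C A A A A ≫
        (R.μ A ⊗ₘ R.μ A)
      = R.δ D ≫ ((ρ_ D).inv ⊗ₘ R.δ D) ≫ ((x ⊗ₘ R.η A) ⊗ₘ (u ⊗ₘ v)) ≫ mid C A A A A ≫
          (R.μ A ⊗ₘ R.μ A) := by rw [← tensorHom_comp_tensorHom]; simp only [Category.assoc]
    _ = R.δ D ≫ ((ρ_ D).inv ⊗ₘ R.δ D) ≫ mid C D (𝟙_ C) D D ≫ ((x ⊗ₘ u) ⊗ₘ (R.η A ⊗ₘ v)) ≫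
          (R.μ A ⊗ₘ R.μ A) := by
        rw [reassoc_of% (mid_nat x (R.η A) u v)]
    _ = R.δ D ≫ ((ρ_ D).inv ⊗ₘ R.δ D) ≫ mid C D (𝟙_ C) D D ≫
          (((x ⊗ₘ u) ≫ R.μ A) ⊗ₘ ((λ_ D).hom ≫ v)) := by
        rw [tensorHom_comp_tensorHom, eta_mu_left]
    _ = R.δ D ≫ ((ρ_ D).inv ⊗ₘ R.δ D) ≫ mid C D (𝟙_ C) D D ≫ ((D ⊗ D) ◁ (λ_ D).hom) ≫
          (((x ⊗ₘ u) ≫ R.μ A) ⊗ₘ v) := by rw [tensorHom_left_decomp]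
    _ = R.δ D ≫ (D ◁ R.δ D) ≫ ((ρ_ D).inv ▷ (D ⊗ D)) ≫ mid C D (𝟙_ C) D D ≫
          ((D ⊗ D) ◁ (λ_ D).hom) ≫ (((x ⊗ₘ u) ≫ R.μ A) ⊗ₘ v) := by
        rw [tensorHom_def']; simp only [Category.assoc]
    _ = R.δ D ≫ (D ◁ R.δ D) ≫ (α_ D D D).inv ≫ (((x ⊗ₘ u) ≫ R.μ A) ⊗ₘ v) := by
        slice_lhs 3 5 => rw [midW1]
    _ = R.δ D ≫ (R.δ D ▷ D) ≫ (((x ⊗ₘ u) ≫ R.μ A) ⊗ₘ v) := by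
        slice_lhs 1 3 => rw [← delta_whiskerRight R D]
        simp only [Category.assoc]
    _ = R.δ D ≫ (conv R.toBialgStruct x u ⊗ₘ v) := by
        simp only [conv, tensorHom_right_decomp, Category.assoc]

theorem term_right {D A : C} (x u v : D ⟶ A) :
    R.δ D ≫ (((λ_ D).inv ≫ (R.η A ⊗ₘ x)) ⊗ₘ (R.δ D ≫ (u ⊗ₘ v))) ≫ mid C A A A A ≫
        (R.μ A ⊗ₘ R.μ A) =
      R.δ D ≫ (u ⊗ₘ conv R.toBialgStruct x v) := by
  calc R.δ D ≫ (((λ_ D).inv ≫ (R.η A ⊗ₘ x)) ⊗ₘ (R.δ D ≫ (u ⊗ₘ v))) ≫ mid C A A A A ≫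
        (R.μ A ⊗ₘ R.μ A)
      = R.δ D ≫ ((λ_ D).inv ⊗ₘ R.δ D) ≫ ((R.η A ⊗ₘ x) ⊗ₘ (u ⊗ₘ v)) ≫ mid C A A A A ≫
          (R.μ A ⊗ₘ R.μ A) := by rw [← tensorHom_comp_tensorHom]; simp only [Category.assoc]
    _ = R.δ D ≫ ((λ_ D).inv ⊗ₘ R.δ D) ≫ mid C (𝟙_ C) D D D ≫ ((R.η A ⊗ₘ u) ⊗ₘ (x ⊗ₘ v)) ≫
          (R.μ A ⊗ₘ R.μ A) := by
        rw [reassoc_of% (mid_nat (R.η A) x u v)]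
    _ = R.δ D ≫ ((λ_ D).inv ⊗ₘ R.δ D) ≫ mid C (𝟙_ C) D D D ≫
          (((λ_ D).hom ≫ u) ⊗ₘ ((x ⊗ₘ v) ≫ R.μ A)) := by
        rw [tensorHom_comp_tensorHom, eta_mu_left]
    _ = R.δ D ≫ ((λ_ D).inv ⊗ₘ R.δ D) ≫ mid C (𝟙_ C) D D D ≫ ((λ_ D).hom ▷ (D ⊗ D)) ≫
          (u ⊗ₘ ((x ⊗ₘ v) ≫ R.μ A)) := by rw [tensorHom_right_decomp]
    _ = R.δ D ≫ (D ◁ R.δ D) ≫ ((λ_ D).inv ▷ (D ⊗ D)) ≫ mid C (𝟙_ C) D D D ≫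
          ((λ_ D).hom ▷ (D ⊗ D)) ≫ (u ⊗ₘ ((x ⊗ₘ v) ≫ R.μ A)) := by
        rw [tensorHom_def']; simp only [Category.assoc]
    _ = R.δ D ≫ (D ◁ R.δ D) ≫ (α_ D D D).inv ≫ ((β_ D D).hom ▷ D) ≫ (α_ D D D).hom ≫
          (u ⊗ₘ ((x ⊗ₘ v) ≫ R.μ A)) := by
        slice_lhs 3 5 => rw [midW2]
        simp only [Category.assoc]
    _ = R.δ D ≫ (R.δ D ▷ D) ≫ ((β_ D D).hom ▷ D) ≫ (α_ D D D).hom ≫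
          (u ⊗ₘ ((x ⊗ₘ v) ≫ R.μ A)) := by
        slice_lhs 1 3 => rw [← delta_whiskerRight R D]
        simp only [Category.assoc]
    _ = R.δ D ≫ (R.δ D ▷ D) ≫ (α_ D D D).hom ≫ (u ⊗ₘ ((x ⊗ₘ v) ≫ R.μ A)) := by
        slice_lhs 2 3 => rw [← comp_whiskerRight, R.cocomm]
        simp only [Category.assoc]
    _ = R.δ D ≫ (D ◁ R.δ D) ≫ (u ⊗ₘ ((x ⊗ₘ v) ≫ R.μ A)) := by
        slice_lhs 1 3 => rw [R.coassoc]
        simp only [Category.assoc]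
    _ = R.δ D ≫ (u ⊗ₘ conv R.toBialgStruct x v) := by
        simp only [conv, tensorHom_left_decomp, Category.assoc]

end Lemmas

section Lemmas2
variable {C : Type u} [Category.{v} C] [MonoidalCategory C] [SymmetricCategory C] [ASMC C]
variable (R : ResourceStruct C)

theorem prodL_cons {D A : C} (x : D ⟶ A) (l : List (D ⟶ A)) :
    prodL R.toBialgStruct (x :: l) = conv R.toBialgStruct x (prodL R.toBialgStruct l) := rfl

theorem selH_nil {D A : C} (p : Fin ([] : List (D ⟶ A)).length → Fin 2) (i : Fin 2) :
    selH ([] : List (D ⟶ A)) p i = [] := rfl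

theorem selH_cons {D A : C} (x : D ⟶ A) (b : List (D ⟶ A)) (i : Fin 2)
    (p : Fin b.length → Fin 2) (j : Fin 2) :
    selH (x :: b) (Fin.cons i p) j =
      if i = j then x :: selH b p j else selH b p j := by
  have hfr : List.finRange (x :: b).length = 0 :: (List.finRange b.length).map Fin.succ :=
    List.finRange_succ
  unfold selH
  rw [hfr, List.filter_cons]
  by_cases h : i = j
  · subst h
    simp [List.filter_map, Function.comp_def, Fin.cons_succ, Fin.cons_zero, List.map_map]
  · simp [h, List.filter_map, Function.comp_def, Fin.cons_succ, Fin.cons_zero, List.map_map]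

theorem convOne_delta {D A : C} :
    convOne R.toBialgStruct D A ≫ R.δ A =
      R.δ D ≫ (convOne R.toBialgStruct D A ⊗ₘ convOne R.toBialgStruct D A) := by
  have key : R.δ D ≫ (R.ε D ⊗ₘ R.ε D) = R.ε D ≫ (λ_ (𝟙_ C)).inv := by
    rw [MonoidalCategory.tensorHom_def, reassoc_of% (R.counit_l D), ← leftUnitor_inv_naturality]
  rw [show (convOne R.toBialgStruct D A ⊗ₘ convOne R.toBialgStruct D A) =
      (R.ε D ≫ R.η A) ⊗ₘ (R.ε D ≫ R.η A) from rfl]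
  rw [← tensorHom_comp_tensorHom, reassoc_of% key]
  simp only [convOne, Category.assoc, R.η_δ]

theorem conv_comp_delta {D A : C} (x w : D ⟶ A) :
    conv R.toBialgStruct x w ≫ R.δ A =
      R.δ D ≫ ((x ≫ R.δ A) ⊗ₘ (w ≫ R.δ A)) ≫ mid C A A A A ≫ (R.μ A ⊗ₘ R.μ A) := by
  simp only [conv, Category.assoc, R.bialg]
  rw [← tensorHom_comp_tensorHom]
  simp only [Category.assoc]

theorem prod_comp_delta {D A : C} (b : List (D ⟶ A)) (hb : ∀ f ∈ b, IsPointedHom R f) :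
    prodL R.toBialgStruct b ≫ R.δ A =
      ∑ p : Fin b.length → Fin 2,
        R.δ D ≫ (prodL R.toBialgStruct (selH b p 0) ⊗ₘ prodL R.toBialgStruct (selH b p 1)) := by
  induction b with
  | nil =>
      haveI : Subsingleton (Fin ([] : List (D ⟶ A)).length → Fin 2) :=
        ⟨fun f g => funext fun i => i.elim0⟩
      rw [Fintype.sum_subsingleton _ (fun i : Fin ([] : List (D ⟶ A)).length => i.elim0)]
      exact convOne_delta R
  | cons x b ih =>
      have hx : IsPointedHom R x := hb x (List.mem_cons_self)
      have hb' : ∀ f ∈ b, IsPointedHom R f := fun f hf => hb f (List.mem_cons_of_mem _ hf)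
      rw [prodL_cons, conv_comp_delta, pointed_delta R x hx, ih hb']
      rw [ASMC.add_tensorHom, tensor_sum_right, tensor_sum_right, ASMC.add_comp,
        sum_comp, sum_comp, ASMC.comp_add, comp_sum, comp_sum]
      simp only [term_left R, term_right R]
      have reindex : ∀ F : (Fin (x :: b).length → Fin 2) → (D ⟶ A ⊗ A),
          ∑ p, F p = ∑ q : Fin 2 × (Fin b.length → Fin 2), F (Fin.cons q.1 q.2) := fun F =>
        (Equiv.sum_comp (Fin.consEquiv fun _ => Fin 2) F).symm
      rw [reindex, Fintype.sum_prod_type, Fin.sum_univ_two]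
      simp [selH_cons, prodL_cons]
end Lemmas2

section Main
variable {C : Type u} [Category.{v} C] [MonoidalCategory C] [SymmetricCategory C] [ASMC C]
variable (R : ResourceStruct C)

theorem main_term {D G A B C' : C} (h : D ⟶ G) (u v : D ⟶ A) (f : G ⊗ A ⟶ B)
    (g : G ⊗ A ⟶ C') :
    R.δ D ≫ ((R.δ D ≫ (h ⊗ₘ h)) ⊗ₘ (R.δ D ≫ (u ⊗ₘ v))) ≫ mid C G G A A ≫ (f ⊗ₘ g) =
      R.δ D ≫ ((R.δ D ≫ (h ⊗ₘ u) ≫ f) ⊗ₘ (R.δ D ≫ (h ⊗ₘ v) ≫ g)) := by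
  rw [← tensorHom_comp_tensorHom]
  simp only [Category.assoc]
  rw [reassoc_of% (mid_nat h h u v), reassoc_of% (delta_delta_mid R D),
    tensorHom_comp_tensorHom, tensorHom_comp_tensorHom]

end Main

/-- propagation of a pointed bag through a pairing: for a comonoid
morphism `h : Δ ⟶ Γ`, a bag `b` of pointed morphisms `Δ ⟶ A`, and morphisms
`f : Γ ⊗ A ⟶ B`, `g : Γ ⊗ A ⟶ C'`, one has
`⟨f, g⟩ ∘ ⟨h, Πb⟩ = Σ_{b ◁ b₁*b₂} ⟨f ∘ ⟨h, Πb₁⟩, g ∘ ⟨h, Πb₂⟩⟩`. -/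
theorem pairing_propagation {C : Type u} [Category.{v} C] [MonoidalCategory C]
    [SymmetricCategory C] [ASMC C] (R : ResourceStruct C) {D G A B C' : C}
    (h : D ⟶ G) (hh : IsComonoidHom R h)
    (b : List (D ⟶ A)) (hb : ∀ f ∈ b, IsPointedHom R f)
    (f : G ⊗ A ⟶ B) (g : G ⊗ A ⟶ C') :
    pairH R h (prodL R.toBialgStruct b) ≫ pairH R f g =
      ∑ p : Fin b.length → Fin 2,
        pairH R (pairH R h (prodL R.toBialgStruct (selH b p 0)) ≫ f)
                (pairH R h (prodL R.toBialgStruct (selH b p 1)) ≫ g) := by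
  simp only [pairH]
  rw [R.δ_tensor G A]
  simp only [Category.assoc]
  rw [← Category.assoc (h ⊗ₘ prodL R.toBialgStruct b), tensorHom_comp_tensorHom, hh.1,
    prod_comp_delta R b hb]
  rw [tensor_sum_right, sum_comp, comp_sum]
  refine Finset.sum_congr rfl fun p _ => ?_
  have := main_term R h (prodL R.toBialgStruct (selH b p 0)) (prodL R.toBialgStruct (selH b p 1)) f g
  exact this
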